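/- If the Lovász extension f_lv of a set function f with f(∅) = 0 is convex on [0,1]^|S|, then f is submodular. -/

import Mathlib

/-- The Lovász extension of a set function, via the threshold (level-set) formula,
which agrees with the greedy sorting formula for `x ∈ [0,1]^m` when `f ∅ = 0`. -/
noncomputable def lovasz {m : ℕ} (f : Finset (Fin m) → ℝ) (x : Fin m → ℝ) : ℝ :=
  ∫ t in (0:ℝ)..1, f (Finset.univ.filter fun i => t ≤ x i)

open MeasureTheory

lemma lovasz_indicator {m : ℕ} (f : Finset (Fin m) → ℝ) (A : Finset (Fin m)) :
    lovasz f (fun i => if i ∈ A then (1:ℝ) else 0) = f A := by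
  rw [lovasz, intervalIntegral.integral_of_le (by norm_num)]
  have hcongr : ∀ t ∈ Set.Ioc (0:ℝ) 1,
      f (Finset.univ.filter fun i => t ≤ (if i ∈ A then (1:ℝ) else 0)) = f A := by
    intro t ht
    congr 1
    ext i
    simp only [Finset.mem_filter, Finset.mem_univ, true_and]
    by_cases hi : i ∈ A <;> simp [hi, ht.2, not_le.mpr ht.1]
  rw [setIntegral_congr_fun measurableSet_Ioc hcongr]
  simp

theorem submodular_of_lovasz_convexOn {m : ℕ} (f : Finset (Fin m) → ℝ)
    (h0 : f ∅ = 0)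
    (hconv : ConvexOn ℝ {x : Fin m → ℝ | ∀ i, x i ∈ Set.Icc (0:ℝ) 1} (lovasz f)) :
    ∀ A B : Finset (Fin m), f (A ∩ B) + f (A ∪ B) ≤ f A + f B := by
  intro A B
  set xA : Fin m → ℝ := fun i => if i ∈ A then (1:ℝ) else 0 with hxA
  set xB : Fin m → ℝ := fun i => if i ∈ B then (1:ℝ) else 0 with hxB
  have hAmem : xA ∈ {x : Fin m → ℝ | ∀ i, x i ∈ Set.Icc (0:ℝ) 1} := by
    intro i; by_cases hi : i ∈ A <;> simp [xA, hi]
  have hBmem : xB ∈ {x : Fin m → ℝ | ∀ i, x i ∈ Set.Icc (0:ℝ) 1} := by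
    intro i; by_cases hi : i ∈ B <;> simp [xB, hi]
  have key := hconv.2 hAmem hBmem (by norm_num : (0:ℝ) ≤ 1/2)
    (by norm_num : (0:ℝ) ≤ 1/2) (by norm_num)
  set x : Fin m → ℝ := (1/2 : ℝ) • xA + (1/2 : ℝ) • xB with hx
  -- compute lovasz f x
  have hmid : lovasz f x = (f (A ∪ B) + f (A ∩ B)) / 2 := by
    rw [lovasz, intervalIntegral.integral_of_le (by norm_num)]
    have hsplit : Set.Ioc (0:ℝ) 1 = Set.Ioc (0:ℝ) (1/2) ∪ Set.Ioc (1/2 : ℝ) 1 := by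
      rw [Set.Ioc_union_Ioc_eq_Ioc (by norm_num) (by norm_num)]
    have h1 : ∀ t ∈ Set.Ioc (0:ℝ) (1/2),
        f (Finset.univ.filter fun i => t ≤ x i) = f (A ∪ B) := by
      intro t ht
      congr 1
      ext i
      simp only [Finset.mem_filter, Finset.mem_univ, true_and, Finset.mem_union]
      have hxi : x i = ((if i ∈ A then (1:ℝ) else 0) + (if i ∈ B then (1:ℝ) else 0)) / 2 := by
        simp only [x, hxA, hxB, Pi.add_apply, Pi.smul_apply, smul_eq_mul]; split_ifs <;> ring
      by_cases hiA : i ∈ A <;> by_cases hiB : i ∈ B <;>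
        simp [hxi, hiA, hiB, ht.2, not_le.mpr ht.1] <;> linarith [ht.1, ht.2]
    have h2 : ∀ t ∈ Set.Ioc (1/2 : ℝ) 1,
        f (Finset.univ.filter fun i => t ≤ x i) = f (A ∩ B) := by
      intro t ht
      congr 1
      ext i
      simp only [Finset.mem_filter, Finset.mem_univ, true_and, Finset.mem_inter]
      have hxi : x i = ((if i ∈ A then (1:ℝ) else 0) + (if i ∈ B then (1:ℝ) else 0)) / 2 := by
        simp only [x, hxA, hxB, Pi.add_apply, Pi.smul_apply, smul_eq_mul]; split_ifs <;> ring
      by_cases hiA : i ∈ A <;> by_cases hiB : i ∈ B <;>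
        simp [hxi, hiA, hiB, ht.2] <;> linarith [ht.1, ht.2]
    have hi1 : IntegrableOn (fun t => f (Finset.univ.filter fun i => t ≤ x i))
        (Set.Ioc (0:ℝ) (1/2)) := by
      rw [integrableOn_congr_fun h1 measurableSet_Ioc]
      exact integrableOn_const (by simp)
    have hi2 : IntegrableOn (fun t => f (Finset.univ.filter fun i => t ≤ x i))
        (Set.Ioc (1/2 : ℝ) 1) := by
      rw [integrableOn_congr_fun h2 measurableSet_Ioc]
      exact integrableOn_const (by simp)
    rw [hsplit, setIntegral_union (Set.Ioc_disjoint_Ioc_of_le le_rfl) measurableSet_Ioc hi1 hi2,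
      setIntegral_congr_fun measurableSet_Ioc h1, setIntegral_congr_fun measurableSet_Ioc h2]
    simp [Real.volume_Ioc]
    rw [max_eq_left (by norm_num : (0:ℝ) ≤ 1 - 2⁻¹)]
    ring
  rw [hmid] at key
  rw [lovasz_indicator f A, lovasz_indicator f B] at key
  simp only [smul_eq_mul] at key
  linarith
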